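/- If μ < (1/(4nm)) Σ_{i=1}^n Σ_{j=1}^m ξ_{ij}, then the function K is not convex on the set [0,1]^n × [0,1]^m. In particular, for fixed model parameters the sub-problem of the balanced self-paced AUC objective with respect to all weight variables (v,u) may be non-convex. -/

import Mathlib

open Finset

/-- If `μ < (1/(4nm)) ∑_{i,j} ξ i j`, then the balanced self-paced AUC
sub-problem objective `K(v,u)` (with fixed model parameters) is not convex on
`[0,1]^n × [0,1]^m`. -/
theorem stmt4
    (n m : ℕ) (hn : 1 ≤ n) (hm : 1 ≤ m)
    (ξ : Fin n → Fin m → ℝ) (hξ : ∀ i j, 0 ≤ ξ i j)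
    (lam μ : ℝ) (hlam : 0 < lam) (hμ : 0 < μ)
    (hlt : μ < (1 / (4 * (n : ℝ) * (m : ℝ))) * ∑ i : Fin n, ∑ j : Fin m, ξ i j) :
    ¬ ConvexOn ℝ ((Set.Icc (0 : Fin n → ℝ) 1) ×ˢ (Set.Icc (0 : Fin m → ℝ) 1))
      (fun p : (Fin n → ℝ) × (Fin m → ℝ) =>
        (1 / ((n : ℝ) * (m : ℝ))) * ∑ i : Fin n, ∑ j : Fin m, p.1 i * p.2 j * ξ i j
          - lam * ((1 / (n : ℝ)) * ∑ i : Fin n, p.1 i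
              + (1 / (m : ℝ)) * ∑ j : Fin m, p.2 j)
          + μ * ((1 / (n : ℝ)) * ∑ i : Fin n, p.1 i
              - (1 / (m : ℝ)) * ∑ j : Fin m, p.2 j) ^ 2) := by
  intro h
  have hn0 : (0:ℝ) < (n:ℝ) := by exact_mod_cast hn
  have hm0 : (0:ℝ) < (m:ℝ) := by exact_mod_cast hm
  set x : (Fin n → ℝ) × (Fin m → ℝ) := (0, 1) with hx
  set y : (Fin n → ℝ) × (Fin m → ℝ) := (1, 0) with hy
  have hxmem : x ∈ (Set.Icc (0 : Fin n → ℝ) 1) ×ˢ (Set.Icc (0 : Fin m → ℝ) 1) := by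
    constructor <;> constructor <;> intro i <;> simp [hx]
  have hymem : y ∈ (Set.Icc (0 : Fin n → ℝ) 1) ×ˢ (Set.Icc (0 : Fin m → ℝ) 1) := by
    constructor <;> constructor <;> intro i <;> simp [hy]
  have key := h.2 hxmem hymem (by norm_num : (0:ℝ) ≤ 1/2) (by norm_num : (0:ℝ) ≤ 1/2)
    (by norm_num)
  have hz1 : ∀ i : Fin n, ((1/2 : ℝ) • x + (1/2 : ℝ) • y).1 i = 1/2 := by
    intro i; simp [hx, hy]
  have hz2 : ∀ j : Fin m, ((1/2 : ℝ) • x + (1/2 : ℝ) • y).2 j = 1/2 := by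
    intro j; simp [hx, hy]
  simp only [hz1, hz2] at key
  simp only [hz1, hz2, hx, hy, Prod.fst, Prod.snd, Pi.one_apply, Pi.zero_apply,
    Finset.sum_const, card_univ, Fintype.card_fin, smul_eq_mul, mul_zero, zero_mul,
    mul_one, one_mul, Finset.sum_const_zero, nsmul_eq_mul] at key
  have e1 : 1/(n:ℝ) * ((n:ℝ) * (1/2)) = 1/2 := by field_simp
  have e2 : 1/(m:ℝ) * ((m:ℝ) * (1/2)) = 1/2 := by field_simp
  have e3 : 1/(n:ℝ) * (n:ℝ) = 1 := by field_simp
  have e4 : 1/(m:ℝ) * (m:ℝ) = 1 := by field_simp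
  rw [e1, e2, e3, e4] at key
  have hmain : 1 / ((n:ℝ) * m) * ∑ i : Fin n, ∑ j : Fin m, 1/2 * (1/2) * ξ i j
      = 1 / (4 * (n:ℝ) * m) * ∑ i : Fin n, ∑ j : Fin m, ξ i j := by
    rw [show (∑ i : Fin n, ∑ j : Fin m, 1/2 * (1/2:ℝ) * ξ i j)
        = (1/4) * ∑ i : Fin n, ∑ j : Fin m, ξ i j by
      rw [Finset.mul_sum]; exact Finset.sum_congr rfl fun i _ => by
        rw [Finset.mul_sum]; exact Finset.sum_congr rfl fun j _ => by ring]
    field_simp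
  rw [hmain] at key
  nlinarith [key, hlt]
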